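/- Let d_1, d_2 be even numbers and d = d_1+d_2. Let λ_1, λ_1' be special orthogonal partitions of d_1 and λ_2, λ_2' special orthogonal partitions of d_2, and suppose λ_1 ≤ λ_1' and λ_2 ≤ λ_2' in dominance order. Then W(λ_1,λ_2) ≤ W(λ_1',λ_2') in dominance order, where both Waldspurger sequences are formed with the type D data. -/
import Mathlib


/-- `f` is a partition of `d`: weakly decreasing, finitely many nonzero terms, total sum `d`.
    Indexing is 0-based: `f j` is the `(j+1)`-st part. -/
def IsPartitionOf (f : ℕ → ℕ) (d : ℕ) : Prop :=
  Antitone f ∧ ∃ N, (∀ j, N ≤ j → f j = 0) ∧ ∑ j ∈ Finset.range N, f j = d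

/-- Transpose of a partition (0-based): `ptrans f k` = #{j : f j ≥ k+1}, i.e. `(f^t)_{k+1}`. -/
noncomputable def ptrans (f : ℕ → ℕ) : ℕ → ℕ := fun k => Nat.card {j : ℕ // k + 1 ≤ f j}

/-- Multiplicity of the part `k` in `f` (meaningful for `k > 0`). -/
noncomputable def pmult (f : ℕ → ℕ) (k : ℕ) : ℕ := Nat.card {j : ℕ // f j = k}

/-- Orthogonal: every even positive part occurs with even multiplicity. -/
def IsOrthogonal (f : ℕ → ℕ) : Prop := ∀ k, 0 < k → Even k → Even (pmult f k)

/-- Symplectic: every odd positive part occurs with even multiplicity. -/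
def IsSymplectic (f : ℕ → ℕ) : Prop := ∀ k, 0 < k → Odd k → Even (pmult f k)

/-- Dominance order for ℕ-valued sequences. -/
def NDomLE (f g : ℕ → ℕ) : Prop :=
  ∀ N, ∑ j ∈ Finset.range N, f j ≤ ∑ j ∈ Finset.range N, g j

/-- Dominance order for ℤ-valued sequences. -/
def DomLE (f g : ℕ → ℤ) : Prop :=
  ∀ N, ∑ j ∈ Finset.range N, f j ≤ ∑ j ∈ Finset.range N, g j

/-- `ν` is the `P`-collapse of `μ` (both of total size `m`): `ν` is a partition of `m`
    satisfying `P`, `ν ≤ μ`, and every partition `σ` of `m` satisfying `P` with `σ ≤ μ`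
    satisfies `σ ≤ ν`. -/
def IsCollapse (P : (ℕ → ℕ) → Prop) (m : ℕ) (μ ν : ℕ → ℕ) : Prop :=
  IsPartitionOf ν m ∧ P ν ∧ NDomLE ν μ ∧
    ∀ σ, IsPartitionOf σ m → P σ → NDomLE σ μ → NDomLE σ ν

/-- B-collapse (largest orthogonal partition below `μ`, `m` odd). -/
def IsBCollapse : ℕ → (ℕ → ℕ) → (ℕ → ℕ) → Prop := IsCollapse IsOrthogonal
/-- C-collapse (largest symplectic partition below `μ`, `m` even). -/
def IsCCollapse : ℕ → (ℕ → ℕ) → (ℕ → ℕ) → Prop := IsCollapse IsSymplectic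
/-- D-collapse (largest orthogonal partition below `μ`, `m` even). -/
def IsDCollapse : ℕ → (ℕ → ℕ) → (ℕ → ℕ) → Prop := IsCollapse IsOrthogonal

/-- `μ^−` : decrease the smallest nonzero part by 1. -/
def minusOne (f : ℕ → ℕ) : ℕ → ℕ :=
  fun j => if 0 < f j ∧ f (j+1) = 0 then f j - 1 else f j

/-- `μ^+` : increase the largest part by 1. -/
def plusOne (f : ℕ → ℕ) : ℕ → ℕ := fun j => if j = 0 then f 0 + 1 else f j

/-- `u = f ∪ g` : `u` is weakly decreasing, finitely supported, and every positive
    part occurs in `u` with multiplicity the sum of its multiplicities in `f` and `g`. -/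
def IsUnionOf (u f g : ℕ → ℕ) : Prop :=
  Antitone u ∧ (∃ N, ∀ j, N ≤ j → u j = 0) ∧
    ∀ k, 0 < k → pmult u k = pmult f k + pmult g k

/-- The sequence ξ attached to `(f, g, ε₁, ε₂, d)`.  Index `j` here corresponds to the
    1-based index `j+1` of the paper. -/
def xiSeq (f g : ℕ → ℕ) (e1 e2 d : ℕ) : ℕ → ℤ := fun j =>
  if (j + 1) % 2 = (d + 1) % 2 ∧ f j % 2 = e1 ∧ g j % 2 = e2 ∧
      (j = 0 ∨ f j + g j < f (j - 1) + g (j - 1)) then 1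
  else if (j + 1) % 2 = d % 2 ∧ f j % 2 = e1 ∧ g j % 2 = e2 ∧
      f (j + 1) + g (j + 1) < f j + g j then -1
  else 0

/-- The Waldspurger sequence `W(f,g) = f + g + ξ` (ℤ-valued a priori). -/
def wald (f g : ℕ → ℕ) (e1 e2 d : ℕ) : ℕ → ℤ :=
  fun j => (f j : ℤ) + (g j : ℤ) + xiSeq f g e1 e2 d j

section stmt8aux

variable {f : ℕ → ℕ}


variable {f : ℕ → ℕ}

lemma ptrans_iff (hf : Antitone f) {N : ℕ} (hN : ∀ j, N ≤ j → f j = 0) (k : ℕ) :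
    ∀ i, k + 1 ≤ f i ↔ i < ptrans f k := by
  have hex : ∃ i, f i ≤ k := ⟨N, by simp [hN N le_rfl]⟩
  set c := Nat.find hex with hc
  have key : ∀ i, k + 1 ≤ f i ↔ i < c := by
    intro i
    constructor
    · intro h
      by_contra hlt
      push_neg at hlt
      have h1 : f i ≤ f c := hf hlt
      have h2 : f c ≤ k := Nat.find_spec hex
      omega
    · intro h
      have := Nat.find_min hex h
      omega
  have hset : {i : ℕ | k + 1 ≤ f i} = Set.Iio c := Set.ext fun i => key i
  have : ptrans f k = c := by
    unfold ptrans
    have : Nat.card {j : ℕ // k + 1 ≤ f j} = Nat.card (Set.Iio c) := by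
      rw [← hset]; rfl
    rw [this]; simp [Nat.card_coe_set_eq]
  rw [this]; exact key

lemma pmult_ptrans (hf : Antitone f) {N : ℕ} (hN : ∀ j, N ≤ j → f j = 0)
    {v : ℕ} (hv : 1 ≤ v) : pmult (ptrans f) v = f (v - 1) - f v := by
  have key := ptrans_iff hf hN
  have hset : {k : ℕ | ptrans f k = v} = Set.Ico (f v) (f (v - 1)) := by
    ext k
    simp only [Set.mem_setOf_eq, Set.mem_Ico]
    constructor
    · intro h
      constructor
      · -- f v ≤ k : else k+1 ≤ f v so v < ptrans f k = v
        by_contra hlt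
        push_neg at hlt
        have := (key k v).mp hlt
        omega
      · -- k < f (v-1) : since v-1 < v = ptrans f k
        have := (key k (v - 1)).mpr (by omega)
        omega
    · intro ⟨h1, h2⟩
      have hvle : v ≤ ptrans f k := by
        have := (key k (v - 1)).mp (by omega)
        omega
      have hlt : ptrans f k < v + 1 := by
        by_contra hge
        push_neg at hge
        have := (key k v).mpr (by omega)
        omega
      omega
  unfold pmult
  have : Nat.card {k : ℕ // ptrans f k = v} = Nat.card (Set.Ico (f v) (f (v - 1))) := by
    rw [← hset]; rfl
  rw [this]; simp [Nat.card_coe_set_eq]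

lemma pairing (hf : Antitone f) {N : ℕ} (hN : ∀ j, N ≤ j → f j = 0)
    (hs : IsSymplectic (ptrans f)) : ∀ i, i % 2 = 0 → f i % 2 = f (i + 1) % 2 := by
  intro i hi
  have h := hs (i + 1) (by omega) (by rw [Nat.odd_iff]; omega)
  rw [pmult_ptrans hf hN (by omega)] at h
  simp only [Nat.add_sub_cancel] at h
  have hle : f (i + 1) ≤ f i := hf (by omega)
  rw [Nat.even_sub hle, Nat.even_iff, Nat.even_iff] at h
  omega

lemma sum_even (hp : ∀ i, i % 2 = 0 → f i % 2 = f (i + 1) % 2) :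
    ∀ N, N % 2 = 0 → (∑ j ∈ Finset.range N, f j) % 2 = 0 := by
  have h2 : ∀ t, (∑ j ∈ Finset.range (2 * t), f j) % 2 = 0 := by
    intro t
    induction t with
    | zero => simp
    | succ t ih =>
      have : 2 * (t + 1) = (2 * t) + 1 + 1 := by omega
      rw [this, Finset.sum_range_succ, Finset.sum_range_succ]
      have := hp (2 * t) (by omega)
      omega
  intro N hNe
  have : N = 2 * (N / 2) := by omega
  rw [this]; exact h2 _


def indic (f g : ℕ → ℕ) : ℕ → ℤ := fun N =>
  if N = 0 then 0
  else if f (N - 1) % 2 = 1 ∧ g (N - 1) % 2 = 1 ∧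
      ((N - 1) % 2 = 0 ∨ f N + g N = f (N - 1) + g (N - 1)) then 1
  else 0

lemma indic_nonneg (f g : ℕ → ℕ) (N : ℕ) : 0 ≤ indic f g N := by
  unfold indic; split_ifs <;> first | contradiction | omega | (simp only [true_and, true_or, or_true, and_true, false_and, and_false, false_or, or_false, not_true, not_false_eq_true] at *; try omega)

lemma indic_le_one (f g : ℕ → ℕ) (N : ℕ) : indic f g N ≤ 1 := by
  unfold indic; split_ifs <;> first | contradiction | omega | (simp only [true_and, true_or, or_true, and_true, false_and, and_false, false_or, or_false, not_true, not_false_eq_true] at *; try omega)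

lemma xi_sum {f g : ℕ → ℕ} (hf : Antitone f) (hg : Antitone g)
    (hpf : ∀ i, i % 2 = 0 → f i % 2 = f (i + 1) % 2)
    (hpg : ∀ i, i % 2 = 0 → g i % 2 = g (i + 1) % 2)
    {d : ℕ} (hd : d % 2 = 0) :
    ∀ N, ∑ j ∈ Finset.range N, xiSeq f g 1 1 d j = indic f g N := by
  intro N
  induction N with
  | zero => simp [indic]
  | succ m ih =>
    rw [Finset.sum_range_succ, ih]
    have hd1 : (d + 1) % 2 = 1 := by omega
    rcases Nat.eq_zero_or_pos m with hm | hm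
    · subst hm
      simp only [indic, xiSeq, hd1, hd, Nat.add_sub_cancel]
      split_ifs <;> first | contradiction | omega | (simp only [true_and, true_or, or_true, and_true, false_and, and_false, false_or, or_false, not_true, not_false_eq_true] at *; try omega)
    · -- m ≥ 1; the new term has index m, previous last index m - 1
      have hfm : f m ≤ f (m - 1) := hf (by omega)
      have hgm : g m ≤ g (m - 1) := hg (by omega)
      have hfm1 : f (m + 1) ≤ f m := hf (by omega)
      have hgm1 : g (m + 1) ≤ g m := hg (by omega)
      simp only [indic, xiSeq, hd1, hd, Nat.add_sub_cancel]
      have hmne : ¬ (m = 0) := by omega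
      have hm1ne : ¬ (m + 1 = 0) := by omega
      rcases Nat.even_or_odd m with hme | hmo
      · -- m even: current index m even (1-based odd): possible +1
        have hme' : m % 2 = 0 := Nat.even_iff.mp hme
        have hp1 : (m + 1) % 2 = 1 := by omega
        have hnotm1 : ¬ ((m - 1) % 2 = 0) := by omega
        rcases eq_or_lt_of_le (Nat.add_le_add hfm hgm) with heq | hlt
        · -- no drop entering m : f m = f (m-1), g m = g (m-1)
          have hfe : f m = f (m - 1) := by omega
          have hge : g m = g (m - 1) := by omega
          split_ifs <;> first | contradiction | omega | (simp only [true_and, true_or, or_true, and_true, false_and, and_false, false_or, or_false, not_true, not_false_eq_true] at *; try omega)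
        · split_ifs <;> first | contradiction | omega | (simp only [true_and, true_or, or_true, and_true, false_and, and_false, false_or, or_false, not_true, not_false_eq_true] at *; try omega)
      · -- m odd: possible -1 ; pairing at m-1
        have hmo' : m % 2 = 1 := Nat.odd_iff.mp hmo
        have hsub : m - 1 + 1 = m := by omega
        have hpair1 : f (m - 1) % 2 = f m % 2 := by
          have h := hpf (m - 1) (by omega)
          rwa [hsub] at h
        have hpair2 : g (m - 1) % 2 = g m % 2 := by
          have h := hpg (m - 1) (by omega)
          rwa [hsub] at h
        split_ifs <;> first | contradiction | omega | (simp only [true_and, true_or, or_true, and_true, false_and, and_false, false_or, or_false, not_true, not_false_eq_true] at *; try omega)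


lemma sum_even' {f : ℕ → ℕ} (hp : ∀ i, i % 2 = 0 → f i % 2 = f (i + 1) % 2) :
    ∀ N, N % 2 = 0 → (∑ j ∈ Finset.range N, f j) % 2 = 0 := sum_even hp

lemma indic_mono {f g f' g' : ℕ → ℕ}
    (hf : Antitone f) (hg : Antitone g) (hf' : Antitone f') (hg' : Antitone g')
    (hpf : ∀ i, i % 2 = 0 → f i % 2 = f (i + 1) % 2)
    (hpg : ∀ i, i % 2 = 0 → g i % 2 = g (i + 1) % 2)
    (hpf' : ∀ i, i % 2 = 0 → f' i % 2 = f' (i + 1) % 2)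
    (hpg' : ∀ i, i % 2 = 0 → g' i % 2 = g' (i + 1) % 2)
    (hle1 : NDomLE f f') (hle2 : NDomLE g g') (N : ℕ)
    (hT : (∑ j ∈ Finset.range N, f j) + (∑ j ∈ Finset.range N, g j)
        = (∑ j ∈ Finset.range N, f' j) + (∑ j ∈ Finset.range N, g' j)) :
    indic f g N ≤ indic f' g' N := by
  rcases Nat.eq_zero_or_pos N with h0 | hpos
  · subst h0; simp [indic]
  obtain ⟨m, rfl⟩ : ∃ m, N = m + 1 := ⟨N - 1, by omega⟩
  by_cases hA : f m % 2 = 1 ∧ g m % 2 = 1 ∧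
      (m % 2 = 0 ∨ f (m + 1) + g (m + 1) = f m + g m)
  swap
  · have h0 : indic f g (m + 1) = 0 := by
      simp only [indic, Nat.add_sub_cancel]
      rw [if_neg (by omega), if_neg hA]
    rw [h0]; exact indic_nonneg _ _ _
  · obtain ⟨hA1, hA2, hA3⟩ := hA
    -- abbreviations for partial sums
    have hUm := hle1 m
    have hVm := hle2 m
    have hUN := hle1 (m + 1)
    have hVN := hle2 (m + 1)
    have eU : ∑ j ∈ Finset.range (m + 1), f j = (∑ j ∈ Finset.range m, f j) + f m :=
      Finset.sum_range_succ f m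
    have eV : ∑ j ∈ Finset.range (m + 1), g j = (∑ j ∈ Finset.range m, g j) + g m :=
      Finset.sum_range_succ g m
    have eU' : ∑ j ∈ Finset.range (m + 1), f' j = (∑ j ∈ Finset.range m, f' j) + f' m :=
      Finset.sum_range_succ f' m
    have eV' : ∑ j ∈ Finset.range (m + 1), g' j = (∑ j ∈ Finset.range m, g' j) + g' m :=
      Finset.sum_range_succ g' m
    suffices h : f' m % 2 = 1 ∧ g' m % 2 = 1 ∧
        (m % 2 = 0 ∨ f' (m + 1) + g' (m + 1) = f' m + g' m) by
      have h1 : indic f' g' (m + 1) = 1 := by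
        simp only [indic, Nat.add_sub_cancel]
        rw [if_neg (by omega), if_pos h]
      rw [h1]; exact indic_le_one _ _ _
    rcases Nat.even_or_odd m with hme | hmo
    · -- m even: parity argument at m
      have hme' : m % 2 = 0 := Nat.even_iff.mp hme
      have p1 : (∑ j ∈ Finset.range m, f j) % 2 = 0 := sum_even' hpf m hme'
      have p2 : (∑ j ∈ Finset.range m, g j) % 2 = 0 := sum_even' hpg m hme'
      have p3 : (∑ j ∈ Finset.range m, f' j) % 2 = 0 := sum_even' hpf' m hme'
      have p4 : (∑ j ∈ Finset.range m, g' j) % 2 = 0 := sum_even' hpg' m hme'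
      refine ⟨by omega, by omega, Or.inl hme'⟩
    · -- m odd
      have hmo' : m % 2 = 1 := Nat.odd_iff.mp hmo
      have hs : f (m + 1) + g (m + 1) = f m + g m := by omega
      have hf1 : f (m + 1) ≤ f m := hf (by omega)
      have hg1 : g (m + 1) ≤ g m := hg (by omega)
      have hfe : f (m + 1) = f m := by omega
      have hge : g (m + 1) = g m := by omega
      have hU2 := hle1 (m + 2)
      have hV2 := hle2 (m + 2)
      have eU2 : ∑ j ∈ Finset.range (m + 2), f j
          = (∑ j ∈ Finset.range (m + 1), f j) + f (m + 1) := Finset.sum_range_succ f (m + 1)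
      have eV2 : ∑ j ∈ Finset.range (m + 2), g j
          = (∑ j ∈ Finset.range (m + 1), g j) + g (m + 1) := Finset.sum_range_succ g (m + 1)
      have eU2' : ∑ j ∈ Finset.range (m + 2), f' j
          = (∑ j ∈ Finset.range (m + 1), f' j) + f' (m + 1) := Finset.sum_range_succ f' (m + 1)
      have eV2' : ∑ j ∈ Finset.range (m + 2), g' j
          = (∑ j ∈ Finset.range (m + 1), g' j) + g' (m + 1) := Finset.sum_range_succ g' (m + 1)
      have hf1' : f' (m + 1) ≤ f' m := hf' (by omega)
      have hg1' : g' (m + 1) ≤ g' m := hg' (by omega)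
      -- key inequalities
      have key1 : f' m + g' m ≤ f m + g m := by omega
      have key2 : f m + g m ≤ f' (m + 1) + g' (m + 1) := by omega
      have hsum' : f' (m + 1) + g' (m + 1) = f' m + g' m ∧ f' m + g' m = f m + g m := by omega
      have hfe' : f' (m + 1) = f' m := by omega
      have hge' : g' (m + 1) = g' m := by omega
      -- partial sums up to m+1 are even (m+1 even)
      have hN2 : (m + 1) % 2 = 0 := by omega
      have p1 : (∑ j ∈ Finset.range (m + 1), f j) % 2 = 0 := sum_even' hpf (m + 1) hN2
      have p2 : (∑ j ∈ Finset.range (m + 1), g j) % 2 = 0 := sum_even' hpg (m + 1) hN2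
      have p3 : (∑ j ∈ Finset.range (m + 1), f' j) % 2 = 0 := sum_even' hpf' (m + 1) hN2
      have p4 : (∑ j ∈ Finset.range (m + 1), g' j) % 2 = 0 := sum_even' hpg' (m + 1) hN2
      refine ⟨by omega, by omega, Or.inr (by omega)⟩


end stmt8aux

/-- type D monotonicity.  `d₁, d₂` even, `d = d₁+d₂`; `λ₁ ≤ λ₁'` and
`λ₂ ≤ λ₂'` special orthogonal partitions imply `W(λ₁,λ₂) ≤ W(λ₁',λ₂')` (ε₁=ε₂=1). -/

theorem stmt8 (d1 d2 : ℕ) (hd1 : Even d1) (hd2 : Even d2)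
    (lam1 lam1' lam2 lam2' : ℕ → ℕ)
    (h1 : IsPartitionOf lam1 d1) (h1o : IsOrthogonal lam1)
    (h1s : IsSymplectic (ptrans lam1))
    (h1' : IsPartitionOf lam1' d1) (h1o' : IsOrthogonal lam1')
    (h1s' : IsSymplectic (ptrans lam1'))
    (h2 : IsPartitionOf lam2 d2) (h2o : IsOrthogonal lam2)
    (h2s : IsSymplectic (ptrans lam2))
    (h2' : IsPartitionOf lam2' d2) (h2o' : IsOrthogonal lam2')
    (h2s' : IsSymplectic (ptrans lam2'))
    (hle1 : NDomLE lam1 lam1') (hle2 : NDomLE lam2 lam2') :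
    DomLE (wald lam1 lam2 1 1 (d1+d2)) (wald lam1' lam2' 1 1 (d1+d2)) := by
  obtain ⟨ha1, N1, hN1, -⟩ := h1
  obtain ⟨ha1', N1', hN1', -⟩ := h1'
  obtain ⟨ha2, N2, hN2, -⟩ := h2
  obtain ⟨ha2', N2', hN2', -⟩ := h2'
  have hp1 := pairing ha1 hN1 h1s
  have hp1' := pairing ha1' hN1' h1s'
  have hp2 := pairing ha2 hN2 h2s
  have hp2' := pairing ha2' hN2' h2s'
  have hd : (d1 + d2) % 2 = 0 := by
    rw [Nat.even_iff] at hd1 hd2; omega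
  intro N
  simp only [wald]
  rw [Finset.sum_add_distrib, Finset.sum_add_distrib, Finset.sum_add_distrib,
    Finset.sum_add_distrib, xi_sum ha1 ha2 hp1 hp2 hd N, xi_sum ha1' ha2' hp1' hp2' hd N,
    ← Nat.cast_sum, ← Nat.cast_sum, ← Nat.cast_sum, ← Nat.cast_sum]
  have hU := hle1 N
  have hV := hle2 N
  have hi1 := indic_le_one lam1 lam2 N
  have hi2 := indic_nonneg lam1' lam2' N
  rcases eq_or_lt_of_le (Nat.add_le_add hU hV) with heq | hlt
  · have := indic_mono ha1 ha2 ha1' ha2' hp1 hp2 hp1' hp2' hle1 hle2 N heq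
    omega
  · omega
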